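/- For any two distinct elements i, j ∈ E, there are exactly two 2-element subsets {k₁,ℓ₁} and {k₂,ℓ₂} of E \ {i,j} such that {i,j,k,ℓ} is an azygous quadruple, and these two 2-element subsets are disjoint from each other. -/

import Mathlib

open Matrix BigOperators

abbrev F2 : Type := ZMod 2
abbrev V4 : Type := Fin 4 → F2
abbrev M4 : Type := Matrix (Fin 4) (Fin 4) F2

/-- The standard symplectic matrix `J = [[0, I₂], [−I₂, 0]]` over `𝔽₂`. -/
def J4 : M4 := !![0, 0, 1, 0; 0, 0, 0, 1; -1, 0, 0, 0; 0, -1, 0, 0]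

/-- `M ∈ Sp₄(𝔽₂)`, i.e. `ᵀM·J·M = J`. -/
def IsSp4 (M : M4) : Prop := Mᵀ * J4 * M = J4

/-- The quadratic form `q₂(m) = m₁m₃ + m₂m₄`. -/
def q2 (m : V4) : F2 := m 0 * m 2 + m 1 * m 3

/-- The dot action `m ⊙ M := m·M − ((ᵀC·A)₀, (ᵀD·B)₀)` for `M = [[A,B],[C,D]]`:
the correction vector has `j`-th entry `M 2 j * M 0 j + M 3 j * M 1 j`, which is the
`j`-th diagonal entry of `ᵀC·A` for `j = 0,1` and of `ᵀD·B` for `j = 2,3`. -/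
def dotAct (m : V4) (M : M4) : V4 :=
  fun j => Matrix.vecMul m M j - (M 2 j * M 0 j + M 3 j * M 1 j)

/-- The set `E` of even theta characteristics: the isotropic vectors of `q₂`. -/
def Echar : Finset V4 := Finset.univ.filter (fun m => q2 m = 0)

/-- `e(x,y,z) := q₂(x)+q₂(y)+q₂(z)+q₂(x+y+z)`. -/
def eSyz (x y z : V4) : F2 := q2 x + q2 y + q2 z + q2 (x + y + z)

/-- A syzygous triple: three pairwise distinct elements of `E` with `e(x,y,z) = 0`. -/
def IsSyzTriple (T : Finset V4) : Prop :=
  T ⊆ Echar ∧ T.card = 3 ∧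
    ∀ x ∈ T, ∀ y ∈ T, ∀ z ∈ T, x ≠ y → x ≠ z → y ≠ z → eSyz x y z = 0

/-- An azygous triple: three pairwise distinct elements of `E` with `e(x,y,z) ≠ 0`. -/
def IsAzyTriple (T : Finset V4) : Prop :=
  T ⊆ Echar ∧ T.card = 3 ∧
    ∀ x ∈ T, ∀ y ∈ T, ∀ z ∈ T, x ≠ y → x ≠ z → y ≠ z → eSyz x y z ≠ 0

/-- A Göpel quadruple: four distinct elements of `E`, all of whose triples are syzygous. -/
def IsGopel (Q : Finset V4) : Prop :=
  Q ⊆ Echar ∧ Q.card = 4 ∧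
    ∀ x ∈ Q, ∀ y ∈ Q, ∀ z ∈ Q, x ≠ y → x ≠ z → y ≠ z → eSyz x y z = 0

/-- An azygous quadruple: four distinct elements of `E`, all of whose triples are azygous. -/
def IsAzyQuad (Q : Finset V4) : Prop :=
  Q ⊆ Echar ∧ Q.card = 4 ∧
    ∀ x ∈ Q, ∀ y ∈ Q, ∀ z ∈ Q, x ≠ y → x ≠ z → y ≠ z → eSyz x y z ≠ 0

def v0000 : V4 := ![0,0,0,0]
def v0001 : V4 := ![0,0,0,1]
def v0010 : V4 := ![0,0,1,0]
def v0011 : V4 := ![0,0,1,1]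
def v0100 : V4 := ![0,1,0,0]
def v0110 : V4 := ![0,1,1,0]
def v1000 : V4 := ![1,0,0,0]
def v1001 : V4 := ![1,0,0,1]
def v1100 : V4 := ![1,1,0,0]
def v1111 : V4 := ![1,1,1,1]

/-- A `k`-point of the Satake compactification `A₂(2)ˢ ⊆ ℙ⁹`: a tuple `(x_m)_{m ∈ E}`
satisfying the five linear equations and the quartic equation. -/
def IsA22Point {k : Type*} [Field k] (x : V4 → k) : Prop :=
  x v1000 - x v1100 + x v1111 - x v1001 = 0 ∧
  x v0000 - x v0001 - x v0110 - x v1100 = 0 ∧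
  x v0110 - x v0010 - x v1111 + x v0011 = 0 ∧
  x v0100 - x v0000 + x v1001 + x v0011 = 0 ∧
  x v0100 - x v1000 + x v0001 - x v0010 = 0 ∧
  (∑ m ∈ Echar, (x m) ^ 2) ^ 2 - 4 * ∑ m ∈ Echar, (x m) ^ 4 = 0

lemma Echar_nonempty : Echar.Nonempty := ⟨v0000, by decide⟩

/-- An absolute value on a field `K`. -/
def IsAbsValue {K : Type*} [Field K] (v : K → ℝ) : Prop :=
  (∀ a, 0 ≤ v a) ∧ (∀ a, v a = 0 ↔ a = 0) ∧
    (∀ a b, v (a * b) = v a * v b) ∧ (∀ a b, v (a + b) ≤ v a + v b)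

/-- A nonarchimedean absolute value on a field `K`. -/
def IsNonarchAbsValue {K : Type*} [Field K] (v : K → ℝ) : Prop :=
  IsAbsValue v ∧ ∀ a b, v (a + b) ≤ max (v a) (v b)

/-- An absolute value induced by a field embedding into `ℂ`. -/
def IsComplexEmbAbsValue {K : Type*} [Field K] (v : K → ℝ) : Prop :=
  ∃ σ : K →+* ℂ, ∀ a, v a = ‖σ a‖

/-- Element-level condition for `{k,l}` to complete `{i,j}` to an azygous quadruple. -/
def goodPair (i j k l : V4) : Prop :=
  q2 k = 0 ∧ q2 l = 0 ∧ k ≠ l ∧ k ≠ i ∧ k ≠ j ∧ l ≠ i ∧ l ≠ j ∧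
    q2 (i + j + k) ≠ 0 ∧ q2 (i + j + l) ≠ 0 ∧ q2 (i + k + l) ≠ 0 ∧ q2 (j + k + l) ≠ 0

instance decGoodPair (i j k l : V4) : Decidable (goodPair i j k l) := by
  unfold goodPair
  exact @instDecidableAnd _ _ inferInstance <| @instDecidableAnd _ _ inferInstance <|
    @instDecidableAnd _ _ inferInstance <| @instDecidableAnd _ _ inferInstance <|
    @instDecidableAnd _ _ inferInstance <| @instDecidableAnd _ _ inferInstance <|
    @instDecidableAnd _ _ inferInstance <| @instDecidableAnd _ _ inferInstance <|
    @instDecidableAnd _ _ inferInstance <| @instDecidableAnd _ _ inferInstance inferInstance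

lemma echar_cases : ∀ m ∈ Echar, m = v0000 ∨ m = v0001 ∨ m = v0010 ∨ m = v0011 ∨
    m = v0100 ∨ m = v0110 ∨ m = v1000 ∨ m = v1001 ∨ m = v1100 ∨ m = v1111 := by decide

lemma case_0000_0001 : goodPair v0000 v0001 v0100 v1111 ∧ goodPair v0000 v0001 v0110 v1100 ∧
    (v0100 ≠ v0110 ∧ v0100 ≠ v1100 ∧ v1111 ≠ v0110 ∧ v1111 ≠ v1100) ∧
    ∀ k l : V4, goodPair v0000 v0001 k l →
      ((k = v0100 ∧ l = v1111) ∨ (k = v1111 ∧ l = v0100) ∨ (k = v0110 ∧ l = v1100) ∨ (k = v1100 ∧ l = v0110)) :=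
  ⟨by decide, by decide, by decide, by decide⟩

lemma case_0000_0010 : goodPair v0000 v0010 v1000 v1111 ∧ goodPair v0000 v0010 v1001 v1100 ∧
    (v1000 ≠ v1001 ∧ v1000 ≠ v1100 ∧ v1111 ≠ v1001 ∧ v1111 ≠ v1100) ∧
    ∀ k l : V4, goodPair v0000 v0010 k l →
      ((k = v1000 ∧ l = v1111) ∨ (k = v1111 ∧ l = v1000) ∨ (k = v1001 ∧ l = v1100) ∨ (k = v1100 ∧ l = v1001)) :=
  ⟨by decide, by decide, by decide, by decide⟩

lemma case_0000_0011 : goodPair v0000 v0011 v0100 v1001 ∧ goodPair v0000 v0011 v0110 v1000 ∧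
    (v0100 ≠ v0110 ∧ v0100 ≠ v1000 ∧ v1001 ≠ v0110 ∧ v1001 ≠ v1000) ∧
    ∀ k l : V4, goodPair v0000 v0011 k l →
      ((k = v0100 ∧ l = v1001) ∨ (k = v1001 ∧ l = v0100) ∨ (k = v0110 ∧ l = v1000) ∨ (k = v1000 ∧ l = v0110)) :=
  ⟨by decide, by decide, by decide, by decide⟩

lemma case_0000_0100 : goodPair v0000 v0100 v0001 v1111 ∧ goodPair v0000 v0100 v0011 v1001 ∧
    (v0001 ≠ v0011 ∧ v0001 ≠ v1001 ∧ v1111 ≠ v0011 ∧ v1111 ≠ v1001) ∧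
    ∀ k l : V4, goodPair v0000 v0100 k l →
      ((k = v0001 ∧ l = v1111) ∨ (k = v1111 ∧ l = v0001) ∨ (k = v0011 ∧ l = v1001) ∨ (k = v1001 ∧ l = v0011)) :=
  ⟨by decide, by decide, by decide, by decide⟩

lemma case_0000_0110 : goodPair v0000 v0110 v0001 v1100 ∧ goodPair v0000 v0110 v0011 v1000 ∧
    (v0001 ≠ v0011 ∧ v0001 ≠ v1000 ∧ v1100 ≠ v0011 ∧ v1100 ≠ v1000) ∧
    ∀ k l : V4, goodPair v0000 v0110 k l →
      ((k = v0001 ∧ l = v1100) ∨ (k = v1100 ∧ l = v0001) ∨ (k = v0011 ∧ l = v1000) ∨ (k = v1000 ∧ l = v0011)) :=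
  ⟨by decide, by decide, by decide, by decide⟩

lemma case_0000_1000 : goodPair v0000 v1000 v0010 v1111 ∧ goodPair v0000 v1000 v0011 v0110 ∧
    (v0010 ≠ v0011 ∧ v0010 ≠ v0110 ∧ v1111 ≠ v0011 ∧ v1111 ≠ v0110) ∧
    ∀ k l : V4, goodPair v0000 v1000 k l →
      ((k = v0010 ∧ l = v1111) ∨ (k = v1111 ∧ l = v0010) ∨ (k = v0011 ∧ l = v0110) ∨ (k = v0110 ∧ l = v0011)) :=
  ⟨by decide, by decide, by decide, by decide⟩

lemma case_0000_1001 : goodPair v0000 v1001 v0010 v1100 ∧ goodPair v0000 v1001 v0011 v0100 ∧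
    (v0010 ≠ v0011 ∧ v0010 ≠ v0100 ∧ v1100 ≠ v0011 ∧ v1100 ≠ v0100) ∧
    ∀ k l : V4, goodPair v0000 v1001 k l →
      ((k = v0010 ∧ l = v1100) ∨ (k = v1100 ∧ l = v0010) ∨ (k = v0011 ∧ l = v0100) ∨ (k = v0100 ∧ l = v0011)) :=
  ⟨by decide, by decide, by decide, by decide⟩

lemma case_0000_1100 : goodPair v0000 v1100 v0001 v0110 ∧ goodPair v0000 v1100 v0010 v1001 ∧
    (v0001 ≠ v0010 ∧ v0001 ≠ v1001 ∧ v0110 ≠ v0010 ∧ v0110 ≠ v1001) ∧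
    ∀ k l : V4, goodPair v0000 v1100 k l →
      ((k = v0001 ∧ l = v0110) ∨ (k = v0110 ∧ l = v0001) ∨ (k = v0010 ∧ l = v1001) ∨ (k = v1001 ∧ l = v0010)) :=
  ⟨by decide, by decide, by decide, by decide⟩

lemma case_0000_1111 : goodPair v0000 v1111 v0001 v0100 ∧ goodPair v0000 v1111 v0010 v1000 ∧
    (v0001 ≠ v0010 ∧ v0001 ≠ v1000 ∧ v0100 ≠ v0010 ∧ v0100 ≠ v1000) ∧
    ∀ k l : V4, goodPair v0000 v1111 k l →
      ((k = v0001 ∧ l = v0100) ∨ (k = v0100 ∧ l = v0001) ∨ (k = v0010 ∧ l = v1000) ∨ (k = v1000 ∧ l = v0010)) :=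
  ⟨by decide, by decide, by decide, by decide⟩

lemma case_0001_0000 : goodPair v0001 v0000 v0100 v1111 ∧ goodPair v0001 v0000 v0110 v1100 ∧
    (v0100 ≠ v0110 ∧ v0100 ≠ v1100 ∧ v1111 ≠ v0110 ∧ v1111 ≠ v1100) ∧
    ∀ k l : V4, goodPair v0001 v0000 k l →
      ((k = v0100 ∧ l = v1111) ∨ (k = v1111 ∧ l = v0100) ∨ (k = v0110 ∧ l = v1100) ∨ (k = v1100 ∧ l = v0110)) :=
  ⟨by decide, by decide, by decide, by decide⟩

lemma case_0001_0010 : goodPair v0001 v0010 v0100 v1000 ∧ goodPair v0001 v0010 v0110 v1001 ∧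
    (v0100 ≠ v0110 ∧ v0100 ≠ v1001 ∧ v1000 ≠ v0110 ∧ v1000 ≠ v1001) ∧
    ∀ k l : V4, goodPair v0001 v0010 k l →
      ((k = v0100 ∧ l = v1000) ∨ (k = v1000 ∧ l = v0100) ∨ (k = v0110 ∧ l = v1001) ∨ (k = v1001 ∧ l = v0110)) :=
  ⟨by decide, by decide, by decide, by decide⟩

lemma case_0001_0011 : goodPair v0001 v0011 v1000 v1100 ∧ goodPair v0001 v0011 v1001 v1111 ∧
    (v1000 ≠ v1001 ∧ v1000 ≠ v1111 ∧ v1100 ≠ v1001 ∧ v1100 ≠ v1111) ∧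
    ∀ k l : V4, goodPair v0001 v0011 k l →
      ((k = v1000 ∧ l = v1100) ∨ (k = v1100 ∧ l = v1000) ∨ (k = v1001 ∧ l = v1111) ∨ (k = v1111 ∧ l = v1001)) :=
  ⟨by decide, by decide, by decide, by decide⟩

lemma case_0001_0100 : goodPair v0001 v0100 v0000 v1111 ∧ goodPair v0001 v0100 v0010 v1000 ∧
    (v0000 ≠ v0010 ∧ v0000 ≠ v1000 ∧ v1111 ≠ v0010 ∧ v1111 ≠ v1000) ∧
    ∀ k l : V4, goodPair v0001 v0100 k l →
      ((k = v0000 ∧ l = v1111) ∨ (k = v1111 ∧ l = v0000) ∨ (k = v0010 ∧ l = v1000) ∨ (k = v1000 ∧ l = v0010)) :=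
  ⟨by decide, by decide, by decide, by decide⟩

lemma case_0001_0110 : goodPair v0001 v0110 v0000 v1100 ∧ goodPair v0001 v0110 v0010 v1001 ∧
    (v0000 ≠ v0010 ∧ v0000 ≠ v1001 ∧ v1100 ≠ v0010 ∧ v1100 ≠ v1001) ∧
    ∀ k l : V4, goodPair v0001 v0110 k l →
      ((k = v0000 ∧ l = v1100) ∨ (k = v1100 ∧ l = v0000) ∨ (k = v0010 ∧ l = v1001) ∨ (k = v1001 ∧ l = v0010)) :=
  ⟨by decide, by decide, by decide, by decide⟩

lemma case_0001_1000 : goodPair v0001 v1000 v0010 v0100 ∧ goodPair v0001 v1000 v0011 v1100 ∧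
    (v0010 ≠ v0011 ∧ v0010 ≠ v1100 ∧ v0100 ≠ v0011 ∧ v0100 ≠ v1100) ∧
    ∀ k l : V4, goodPair v0001 v1000 k l →
      ((k = v0010 ∧ l = v0100) ∨ (k = v0100 ∧ l = v0010) ∨ (k = v0011 ∧ l = v1100) ∨ (k = v1100 ∧ l = v0011)) :=
  ⟨by decide, by decide, by decide, by decide⟩

lemma case_0001_1001 : goodPair v0001 v1001 v0010 v0110 ∧ goodPair v0001 v1001 v0011 v1111 ∧
    (v0010 ≠ v0011 ∧ v0010 ≠ v1111 ∧ v0110 ≠ v0011 ∧ v0110 ≠ v1111) ∧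
    ∀ k l : V4, goodPair v0001 v1001 k l →
      ((k = v0010 ∧ l = v0110) ∨ (k = v0110 ∧ l = v0010) ∨ (k = v0011 ∧ l = v1111) ∨ (k = v1111 ∧ l = v0011)) :=
  ⟨by decide, by decide, by decide, by decide⟩

lemma case_0001_1100 : goodPair v0001 v1100 v0000 v0110 ∧ goodPair v0001 v1100 v0011 v1000 ∧
    (v0000 ≠ v0011 ∧ v0000 ≠ v1000 ∧ v0110 ≠ v0011 ∧ v0110 ≠ v1000) ∧
    ∀ k l : V4, goodPair v0001 v1100 k l →
      ((k = v0000 ∧ l = v0110) ∨ (k = v0110 ∧ l = v0000) ∨ (k = v0011 ∧ l = v1000) ∨ (k = v1000 ∧ l = v0011)) :=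
  ⟨by decide, by decide, by decide, by decide⟩

lemma case_0001_1111 : goodPair v0001 v1111 v0000 v0100 ∧ goodPair v0001 v1111 v0011 v1001 ∧
    (v0000 ≠ v0011 ∧ v0000 ≠ v1001 ∧ v0100 ≠ v0011 ∧ v0100 ≠ v1001) ∧
    ∀ k l : V4, goodPair v0001 v1111 k l →
      ((k = v0000 ∧ l = v0100) ∨ (k = v0100 ∧ l = v0000) ∨ (k = v0011 ∧ l = v1001) ∨ (k = v1001 ∧ l = v0011)) :=
  ⟨by decide, by decide, by decide, by decide⟩

lemma case_0010_0000 : goodPair v0010 v0000 v1000 v1111 ∧ goodPair v0010 v0000 v1001 v1100 ∧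
    (v1000 ≠ v1001 ∧ v1000 ≠ v1100 ∧ v1111 ≠ v1001 ∧ v1111 ≠ v1100) ∧
    ∀ k l : V4, goodPair v0010 v0000 k l →
      ((k = v1000 ∧ l = v1111) ∨ (k = v1111 ∧ l = v1000) ∨ (k = v1001 ∧ l = v1100) ∨ (k = v1100 ∧ l = v1001)) :=
  ⟨by decide, by decide, by decide, by decide⟩

lemma case_0010_0001 : goodPair v0010 v0001 v0100 v1000 ∧ goodPair v0010 v0001 v0110 v1001 ∧
    (v0100 ≠ v0110 ∧ v0100 ≠ v1001 ∧ v1000 ≠ v0110 ∧ v1000 ≠ v1001) ∧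
    ∀ k l : V4, goodPair v0010 v0001 k l →
      ((k = v0100 ∧ l = v1000) ∨ (k = v1000 ∧ l = v0100) ∨ (k = v0110 ∧ l = v1001) ∨ (k = v1001 ∧ l = v0110)) :=
  ⟨by decide, by decide, by decide, by decide⟩

lemma case_0010_0011 : goodPair v0010 v0011 v0100 v1100 ∧ goodPair v0010 v0011 v0110 v1111 ∧
    (v0100 ≠ v0110 ∧ v0100 ≠ v1111 ∧ v1100 ≠ v0110 ∧ v1100 ≠ v1111) ∧
    ∀ k l : V4, goodPair v0010 v0011 k l →
      ((k = v0100 ∧ l = v1100) ∨ (k = v1100 ∧ l = v0100) ∨ (k = v0110 ∧ l = v1111) ∨ (k = v1111 ∧ l = v0110)) :=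
  ⟨by decide, by decide, by decide, by decide⟩

lemma case_0010_0100 : goodPair v0010 v0100 v0001 v1000 ∧ goodPair v0010 v0100 v0011 v1100 ∧
    (v0001 ≠ v0011 ∧ v0001 ≠ v1100 ∧ v1000 ≠ v0011 ∧ v1000 ≠ v1100) ∧
    ∀ k l : V4, goodPair v0010 v0100 k l →
      ((k = v0001 ∧ l = v1000) ∨ (k = v1000 ∧ l = v0001) ∨ (k = v0011 ∧ l = v1100) ∨ (k = v1100 ∧ l = v0011)) :=
  ⟨by decide, by decide, by decide, by decide⟩

lemma case_0010_0110 : goodPair v0010 v0110 v0001 v1001 ∧ goodPair v0010 v0110 v0011 v1111 ∧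
    (v0001 ≠ v0011 ∧ v0001 ≠ v1111 ∧ v1001 ≠ v0011 ∧ v1001 ≠ v1111) ∧
    ∀ k l : V4, goodPair v0010 v0110 k l →
      ((k = v0001 ∧ l = v1001) ∨ (k = v1001 ∧ l = v0001) ∨ (k = v0011 ∧ l = v1111) ∨ (k = v1111 ∧ l = v0011)) :=
  ⟨by decide, by decide, by decide, by decide⟩

lemma case_0010_1000 : goodPair v0010 v1000 v0000 v1111 ∧ goodPair v0010 v1000 v0001 v0100 ∧
    (v0000 ≠ v0001 ∧ v0000 ≠ v0100 ∧ v1111 ≠ v0001 ∧ v1111 ≠ v0100) ∧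
    ∀ k l : V4, goodPair v0010 v1000 k l →
      ((k = v0000 ∧ l = v1111) ∨ (k = v1111 ∧ l = v0000) ∨ (k = v0001 ∧ l = v0100) ∨ (k = v0100 ∧ l = v0001)) :=
  ⟨by decide, by decide, by decide, by decide⟩

lemma case_0010_1001 : goodPair v0010 v1001 v0000 v1100 ∧ goodPair v0010 v1001 v0001 v0110 ∧
    (v0000 ≠ v0001 ∧ v0000 ≠ v0110 ∧ v1100 ≠ v0001 ∧ v1100 ≠ v0110) ∧
    ∀ k l : V4, goodPair v0010 v1001 k l →
      ((k = v0000 ∧ l = v1100) ∨ (k = v1100 ∧ l = v0000) ∨ (k = v0001 ∧ l = v0110) ∨ (k = v0110 ∧ l = v0001)) :=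
  ⟨by decide, by decide, by decide, by decide⟩

lemma case_0010_1100 : goodPair v0010 v1100 v0000 v1001 ∧ goodPair v0010 v1100 v0011 v0100 ∧
    (v0000 ≠ v0011 ∧ v0000 ≠ v0100 ∧ v1001 ≠ v0011 ∧ v1001 ≠ v0100) ∧
    ∀ k l : V4, goodPair v0010 v1100 k l →
      ((k = v0000 ∧ l = v1001) ∨ (k = v1001 ∧ l = v0000) ∨ (k = v0011 ∧ l = v0100) ∨ (k = v0100 ∧ l = v0011)) :=
  ⟨by decide, by decide, by decide, by decide⟩

lemma case_0010_1111 : goodPair v0010 v1111 v0000 v1000 ∧ goodPair v0010 v1111 v0011 v0110 ∧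
    (v0000 ≠ v0011 ∧ v0000 ≠ v0110 ∧ v1000 ≠ v0011 ∧ v1000 ≠ v0110) ∧
    ∀ k l : V4, goodPair v0010 v1111 k l →
      ((k = v0000 ∧ l = v1000) ∨ (k = v1000 ∧ l = v0000) ∨ (k = v0011 ∧ l = v0110) ∨ (k = v0110 ∧ l = v0011)) :=
  ⟨by decide, by decide, by decide, by decide⟩

lemma case_0011_0000 : goodPair v0011 v0000 v0100 v1001 ∧ goodPair v0011 v0000 v0110 v1000 ∧
    (v0100 ≠ v0110 ∧ v0100 ≠ v1000 ∧ v1001 ≠ v0110 ∧ v1001 ≠ v1000) ∧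
    ∀ k l : V4, goodPair v0011 v0000 k l →
      ((k = v0100 ∧ l = v1001) ∨ (k = v1001 ∧ l = v0100) ∨ (k = v0110 ∧ l = v1000) ∨ (k = v1000 ∧ l = v0110)) :=
  ⟨by decide, by decide, by decide, by decide⟩

lemma case_0011_0001 : goodPair v0011 v0001 v1000 v1100 ∧ goodPair v0011 v0001 v1001 v1111 ∧
    (v1000 ≠ v1001 ∧ v1000 ≠ v1111 ∧ v1100 ≠ v1001 ∧ v1100 ≠ v1111) ∧
    ∀ k l : V4, goodPair v0011 v0001 k l →
      ((k = v1000 ∧ l = v1100) ∨ (k = v1100 ∧ l = v1000) ∨ (k = v1001 ∧ l = v1111) ∨ (k = v1111 ∧ l = v1001)) :=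
  ⟨by decide, by decide, by decide, by decide⟩

lemma case_0011_0010 : goodPair v0011 v0010 v0100 v1100 ∧ goodPair v0011 v0010 v0110 v1111 ∧
    (v0100 ≠ v0110 ∧ v0100 ≠ v1111 ∧ v1100 ≠ v0110 ∧ v1100 ≠ v1111) ∧
    ∀ k l : V4, goodPair v0011 v0010 k l →
      ((k = v0100 ∧ l = v1100) ∨ (k = v1100 ∧ l = v0100) ∨ (k = v0110 ∧ l = v1111) ∨ (k = v1111 ∧ l = v0110)) :=
  ⟨by decide, by decide, by decide, by decide⟩

lemma case_0011_0100 : goodPair v0011 v0100 v0000 v1001 ∧ goodPair v0011 v0100 v0010 v1100 ∧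
    (v0000 ≠ v0010 ∧ v0000 ≠ v1100 ∧ v1001 ≠ v0010 ∧ v1001 ≠ v1100) ∧
    ∀ k l : V4, goodPair v0011 v0100 k l →
      ((k = v0000 ∧ l = v1001) ∨ (k = v1001 ∧ l = v0000) ∨ (k = v0010 ∧ l = v1100) ∨ (k = v1100 ∧ l = v0010)) :=
  ⟨by decide, by decide, by decide, by decide⟩

lemma case_0011_0110 : goodPair v0011 v0110 v0000 v1000 ∧ goodPair v0011 v0110 v0010 v1111 ∧
    (v0000 ≠ v0010 ∧ v0000 ≠ v1111 ∧ v1000 ≠ v0010 ∧ v1000 ≠ v1111) ∧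
    ∀ k l : V4, goodPair v0011 v0110 k l →
      ((k = v0000 ∧ l = v1000) ∨ (k = v1000 ∧ l = v0000) ∨ (k = v0010 ∧ l = v1111) ∨ (k = v1111 ∧ l = v0010)) :=
  ⟨by decide, by decide, by decide, by decide⟩

lemma case_0011_1000 : goodPair v0011 v1000 v0000 v0110 ∧ goodPair v0011 v1000 v0001 v1100 ∧
    (v0000 ≠ v0001 ∧ v0000 ≠ v1100 ∧ v0110 ≠ v0001 ∧ v0110 ≠ v1100) ∧
    ∀ k l : V4, goodPair v0011 v1000 k l →
      ((k = v0000 ∧ l = v0110) ∨ (k = v0110 ∧ l = v0000) ∨ (k = v0001 ∧ l = v1100) ∨ (k = v1100 ∧ l = v0001)) :=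
  ⟨by decide, by decide, by decide, by decide⟩

lemma case_0011_1001 : goodPair v0011 v1001 v0000 v0100 ∧ goodPair v0011 v1001 v0001 v1111 ∧
    (v0000 ≠ v0001 ∧ v0000 ≠ v1111 ∧ v0100 ≠ v0001 ∧ v0100 ≠ v1111) ∧
    ∀ k l : V4, goodPair v0011 v1001 k l →
      ((k = v0000 ∧ l = v0100) ∨ (k = v0100 ∧ l = v0000) ∨ (k = v0001 ∧ l = v1111) ∨ (k = v1111 ∧ l = v0001)) :=
  ⟨by decide, by decide, by decide, by decide⟩

lemma case_0011_1100 : goodPair v0011 v1100 v0001 v1000 ∧ goodPair v0011 v1100 v0010 v0100 ∧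
    (v0001 ≠ v0010 ∧ v0001 ≠ v0100 ∧ v1000 ≠ v0010 ∧ v1000 ≠ v0100) ∧
    ∀ k l : V4, goodPair v0011 v1100 k l →
      ((k = v0001 ∧ l = v1000) ∨ (k = v1000 ∧ l = v0001) ∨ (k = v0010 ∧ l = v0100) ∨ (k = v0100 ∧ l = v0010)) :=
  ⟨by decide, by decide, by decide, by decide⟩

lemma case_0011_1111 : goodPair v0011 v1111 v0001 v1001 ∧ goodPair v0011 v1111 v0010 v0110 ∧
    (v0001 ≠ v0010 ∧ v0001 ≠ v0110 ∧ v1001 ≠ v0010 ∧ v1001 ≠ v0110) ∧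
    ∀ k l : V4, goodPair v0011 v1111 k l →
      ((k = v0001 ∧ l = v1001) ∨ (k = v1001 ∧ l = v0001) ∨ (k = v0010 ∧ l = v0110) ∨ (k = v0110 ∧ l = v0010)) :=
  ⟨by decide, by decide, by decide, by decide⟩

lemma case_0100_0000 : goodPair v0100 v0000 v0001 v1111 ∧ goodPair v0100 v0000 v0011 v1001 ∧
    (v0001 ≠ v0011 ∧ v0001 ≠ v1001 ∧ v1111 ≠ v0011 ∧ v1111 ≠ v1001) ∧
    ∀ k l : V4, goodPair v0100 v0000 k l →
      ((k = v0001 ∧ l = v1111) ∨ (k = v1111 ∧ l = v0001) ∨ (k = v0011 ∧ l = v1001) ∨ (k = v1001 ∧ l = v0011)) :=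
  ⟨by decide, by decide, by decide, by decide⟩

lemma case_0100_0001 : goodPair v0100 v0001 v0000 v1111 ∧ goodPair v0100 v0001 v0010 v1000 ∧
    (v0000 ≠ v0010 ∧ v0000 ≠ v1000 ∧ v1111 ≠ v0010 ∧ v1111 ≠ v1000) ∧
    ∀ k l : V4, goodPair v0100 v0001 k l →
      ((k = v0000 ∧ l = v1111) ∨ (k = v1111 ∧ l = v0000) ∨ (k = v0010 ∧ l = v1000) ∨ (k = v1000 ∧ l = v0010)) :=
  ⟨by decide, by decide, by decide, by decide⟩

lemma case_0100_0010 : goodPair v0100 v0010 v0001 v1000 ∧ goodPair v0100 v0010 v0011 v1100 ∧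
    (v0001 ≠ v0011 ∧ v0001 ≠ v1100 ∧ v1000 ≠ v0011 ∧ v1000 ≠ v1100) ∧
    ∀ k l : V4, goodPair v0100 v0010 k l →
      ((k = v0001 ∧ l = v1000) ∨ (k = v1000 ∧ l = v0001) ∨ (k = v0011 ∧ l = v1100) ∨ (k = v1100 ∧ l = v0011)) :=
  ⟨by decide, by decide, by decide, by decide⟩

lemma case_0100_0011 : goodPair v0100 v0011 v0000 v1001 ∧ goodPair v0100 v0011 v0010 v1100 ∧
    (v0000 ≠ v0010 ∧ v0000 ≠ v1100 ∧ v1001 ≠ v0010 ∧ v1001 ≠ v1100) ∧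
    ∀ k l : V4, goodPair v0100 v0011 k l →
      ((k = v0000 ∧ l = v1001) ∨ (k = v1001 ∧ l = v0000) ∨ (k = v0010 ∧ l = v1100) ∨ (k = v1100 ∧ l = v0010)) :=
  ⟨by decide, by decide, by decide, by decide⟩

lemma case_0100_0110 : goodPair v0100 v0110 v1000 v1001 ∧ goodPair v0100 v0110 v1100 v1111 ∧
    (v1000 ≠ v1100 ∧ v1000 ≠ v1111 ∧ v1001 ≠ v1100 ∧ v1001 ≠ v1111) ∧
    ∀ k l : V4, goodPair v0100 v0110 k l →
      ((k = v1000 ∧ l = v1001) ∨ (k = v1001 ∧ l = v1000) ∨ (k = v1100 ∧ l = v1111) ∨ (k = v1111 ∧ l = v1100)) :=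
  ⟨by decide, by decide, by decide, by decide⟩

lemma case_0100_1000 : goodPair v0100 v1000 v0001 v0010 ∧ goodPair v0100 v1000 v0110 v1001 ∧
    (v0001 ≠ v0110 ∧ v0001 ≠ v1001 ∧ v0010 ≠ v0110 ∧ v0010 ≠ v1001) ∧
    ∀ k l : V4, goodPair v0100 v1000 k l →
      ((k = v0001 ∧ l = v0010) ∨ (k = v0010 ∧ l = v0001) ∨ (k = v0110 ∧ l = v1001) ∨ (k = v1001 ∧ l = v0110)) :=
  ⟨by decide, by decide, by decide, by decide⟩

lemma case_0100_1001 : goodPair v0100 v1001 v0000 v0011 ∧ goodPair v0100 v1001 v0110 v1000 ∧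
    (v0000 ≠ v0110 ∧ v0000 ≠ v1000 ∧ v0011 ≠ v0110 ∧ v0011 ≠ v1000) ∧
    ∀ k l : V4, goodPair v0100 v1001 k l →
      ((k = v0000 ∧ l = v0011) ∨ (k = v0011 ∧ l = v0000) ∨ (k = v0110 ∧ l = v1000) ∨ (k = v1000 ∧ l = v0110)) :=
  ⟨by decide, by decide, by decide, by decide⟩

lemma case_0100_1100 : goodPair v0100 v1100 v0010 v0011 ∧ goodPair v0100 v1100 v0110 v1111 ∧
    (v0010 ≠ v0110 ∧ v0010 ≠ v1111 ∧ v0011 ≠ v0110 ∧ v0011 ≠ v1111) ∧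
    ∀ k l : V4, goodPair v0100 v1100 k l →
      ((k = v0010 ∧ l = v0011) ∨ (k = v0011 ∧ l = v0010) ∨ (k = v0110 ∧ l = v1111) ∨ (k = v1111 ∧ l = v0110)) :=
  ⟨by decide, by decide, by decide, by decide⟩

lemma case_0100_1111 : goodPair v0100 v1111 v0000 v0001 ∧ goodPair v0100 v1111 v0110 v1100 ∧
    (v0000 ≠ v0110 ∧ v0000 ≠ v1100 ∧ v0001 ≠ v0110 ∧ v0001 ≠ v1100) ∧
    ∀ k l : V4, goodPair v0100 v1111 k l →
      ((k = v0000 ∧ l = v0001) ∨ (k = v0001 ∧ l = v0000) ∨ (k = v0110 ∧ l = v1100) ∨ (k = v1100 ∧ l = v0110)) :=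
  ⟨by decide, by decide, by decide, by decide⟩

lemma case_0110_0000 : goodPair v0110 v0000 v0001 v1100 ∧ goodPair v0110 v0000 v0011 v1000 ∧
    (v0001 ≠ v0011 ∧ v0001 ≠ v1000 ∧ v1100 ≠ v0011 ∧ v1100 ≠ v1000) ∧
    ∀ k l : V4, goodPair v0110 v0000 k l →
      ((k = v0001 ∧ l = v1100) ∨ (k = v1100 ∧ l = v0001) ∨ (k = v0011 ∧ l = v1000) ∨ (k = v1000 ∧ l = v0011)) :=
  ⟨by decide, by decide, by decide, by decide⟩

lemma case_0110_0001 : goodPair v0110 v0001 v0000 v1100 ∧ goodPair v0110 v0001 v0010 v1001 ∧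
    (v0000 ≠ v0010 ∧ v0000 ≠ v1001 ∧ v1100 ≠ v0010 ∧ v1100 ≠ v1001) ∧
    ∀ k l : V4, goodPair v0110 v0001 k l →
      ((k = v0000 ∧ l = v1100) ∨ (k = v1100 ∧ l = v0000) ∨ (k = v0010 ∧ l = v1001) ∨ (k = v1001 ∧ l = v0010)) :=
  ⟨by decide, by decide, by decide, by decide⟩

lemma case_0110_0010 : goodPair v0110 v0010 v0001 v1001 ∧ goodPair v0110 v0010 v0011 v1111 ∧
    (v0001 ≠ v0011 ∧ v0001 ≠ v1111 ∧ v1001 ≠ v0011 ∧ v1001 ≠ v1111) ∧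
    ∀ k l : V4, goodPair v0110 v0010 k l →
      ((k = v0001 ∧ l = v1001) ∨ (k = v1001 ∧ l = v0001) ∨ (k = v0011 ∧ l = v1111) ∨ (k = v1111 ∧ l = v0011)) :=
  ⟨by decide, by decide, by decide, by decide⟩

lemma case_0110_0011 : goodPair v0110 v0011 v0000 v1000 ∧ goodPair v0110 v0011 v0010 v1111 ∧
    (v0000 ≠ v0010 ∧ v0000 ≠ v1111 ∧ v1000 ≠ v0010 ∧ v1000 ≠ v1111) ∧
    ∀ k l : V4, goodPair v0110 v0011 k l →
      ((k = v0000 ∧ l = v1000) ∨ (k = v1000 ∧ l = v0000) ∨ (k = v0010 ∧ l = v1111) ∨ (k = v1111 ∧ l = v0010)) :=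
  ⟨by decide, by decide, by decide, by decide⟩

lemma case_0110_0100 : goodPair v0110 v0100 v1000 v1001 ∧ goodPair v0110 v0100 v1100 v1111 ∧
    (v1000 ≠ v1100 ∧ v1000 ≠ v1111 ∧ v1001 ≠ v1100 ∧ v1001 ≠ v1111) ∧
    ∀ k l : V4, goodPair v0110 v0100 k l →
      ((k = v1000 ∧ l = v1001) ∨ (k = v1001 ∧ l = v1000) ∨ (k = v1100 ∧ l = v1111) ∨ (k = v1111 ∧ l = v1100)) :=
  ⟨by decide, by decide, by decide, by decide⟩

lemma case_0110_1000 : goodPair v0110 v1000 v0000 v0011 ∧ goodPair v0110 v1000 v0100 v1001 ∧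
    (v0000 ≠ v0100 ∧ v0000 ≠ v1001 ∧ v0011 ≠ v0100 ∧ v0011 ≠ v1001) ∧
    ∀ k l : V4, goodPair v0110 v1000 k l →
      ((k = v0000 ∧ l = v0011) ∨ (k = v0011 ∧ l = v0000) ∨ (k = v0100 ∧ l = v1001) ∨ (k = v1001 ∧ l = v0100)) :=
  ⟨by decide, by decide, by decide, by decide⟩

lemma case_0110_1001 : goodPair v0110 v1001 v0001 v0010 ∧ goodPair v0110 v1001 v0100 v1000 ∧
    (v0001 ≠ v0100 ∧ v0001 ≠ v1000 ∧ v0010 ≠ v0100 ∧ v0010 ≠ v1000) ∧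
    ∀ k l : V4, goodPair v0110 v1001 k l →
      ((k = v0001 ∧ l = v0010) ∨ (k = v0010 ∧ l = v0001) ∨ (k = v0100 ∧ l = v1000) ∨ (k = v1000 ∧ l = v0100)) :=
  ⟨by decide, by decide, by decide, by decide⟩

lemma case_0110_1100 : goodPair v0110 v1100 v0000 v0001 ∧ goodPair v0110 v1100 v0100 v1111 ∧
    (v0000 ≠ v0100 ∧ v0000 ≠ v1111 ∧ v0001 ≠ v0100 ∧ v0001 ≠ v1111) ∧
    ∀ k l : V4, goodPair v0110 v1100 k l →
      ((k = v0000 ∧ l = v0001) ∨ (k = v0001 ∧ l = v0000) ∨ (k = v0100 ∧ l = v1111) ∨ (k = v1111 ∧ l = v0100)) :=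
  ⟨by decide, by decide, by decide, by decide⟩

lemma case_0110_1111 : goodPair v0110 v1111 v0010 v0011 ∧ goodPair v0110 v1111 v0100 v1100 ∧
    (v0010 ≠ v0100 ∧ v0010 ≠ v1100 ∧ v0011 ≠ v0100 ∧ v0011 ≠ v1100) ∧
    ∀ k l : V4, goodPair v0110 v1111 k l →
      ((k = v0010 ∧ l = v0011) ∨ (k = v0011 ∧ l = v0010) ∨ (k = v0100 ∧ l = v1100) ∨ (k = v1100 ∧ l = v0100)) :=
  ⟨by decide, by decide, by decide, by decide⟩

lemma case_1000_0000 : goodPair v1000 v0000 v0010 v1111 ∧ goodPair v1000 v0000 v0011 v0110 ∧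
    (v0010 ≠ v0011 ∧ v0010 ≠ v0110 ∧ v1111 ≠ v0011 ∧ v1111 ≠ v0110) ∧
    ∀ k l : V4, goodPair v1000 v0000 k l →
      ((k = v0010 ∧ l = v1111) ∨ (k = v1111 ∧ l = v0010) ∨ (k = v0011 ∧ l = v0110) ∨ (k = v0110 ∧ l = v0011)) :=
  ⟨by decide, by decide, by decide, by decide⟩

lemma case_1000_0001 : goodPair v1000 v0001 v0010 v0100 ∧ goodPair v1000 v0001 v0011 v1100 ∧
    (v0010 ≠ v0011 ∧ v0010 ≠ v1100 ∧ v0100 ≠ v0011 ∧ v0100 ≠ v1100) ∧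
    ∀ k l : V4, goodPair v1000 v0001 k l →
      ((k = v0010 ∧ l = v0100) ∨ (k = v0100 ∧ l = v0010) ∨ (k = v0011 ∧ l = v1100) ∨ (k = v1100 ∧ l = v0011)) :=
  ⟨by decide, by decide, by decide, by decide⟩

lemma case_1000_0010 : goodPair v1000 v0010 v0000 v1111 ∧ goodPair v1000 v0010 v0001 v0100 ∧
    (v0000 ≠ v0001 ∧ v0000 ≠ v0100 ∧ v1111 ≠ v0001 ∧ v1111 ≠ v0100) ∧
    ∀ k l : V4, goodPair v1000 v0010 k l →
      ((k = v0000 ∧ l = v1111) ∨ (k = v1111 ∧ l = v0000) ∨ (k = v0001 ∧ l = v0100) ∨ (k = v0100 ∧ l = v0001)) :=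
  ⟨by decide, by decide, by decide, by decide⟩

lemma case_1000_0011 : goodPair v1000 v0011 v0000 v0110 ∧ goodPair v1000 v0011 v0001 v1100 ∧
    (v0000 ≠ v0001 ∧ v0000 ≠ v1100 ∧ v0110 ≠ v0001 ∧ v0110 ≠ v1100) ∧
    ∀ k l : V4, goodPair v1000 v0011 k l →
      ((k = v0000 ∧ l = v0110) ∨ (k = v0110 ∧ l = v0000) ∨ (k = v0001 ∧ l = v1100) ∨ (k = v1100 ∧ l = v0001)) :=
  ⟨by decide, by decide, by decide, by decide⟩

lemma case_1000_0100 : goodPair v1000 v0100 v0001 v0010 ∧ goodPair v1000 v0100 v0110 v1001 ∧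
    (v0001 ≠ v0110 ∧ v0001 ≠ v1001 ∧ v0010 ≠ v0110 ∧ v0010 ≠ v1001) ∧
    ∀ k l : V4, goodPair v1000 v0100 k l →
      ((k = v0001 ∧ l = v0010) ∨ (k = v0010 ∧ l = v0001) ∨ (k = v0110 ∧ l = v1001) ∨ (k = v1001 ∧ l = v0110)) :=
  ⟨by decide, by decide, by decide, by decide⟩

lemma case_1000_0110 : goodPair v1000 v0110 v0000 v0011 ∧ goodPair v1000 v0110 v0100 v1001 ∧
    (v0000 ≠ v0100 ∧ v0000 ≠ v1001 ∧ v0011 ≠ v0100 ∧ v0011 ≠ v1001) ∧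
    ∀ k l : V4, goodPair v1000 v0110 k l →
      ((k = v0000 ∧ l = v0011) ∨ (k = v0011 ∧ l = v0000) ∨ (k = v0100 ∧ l = v1001) ∨ (k = v1001 ∧ l = v0100)) :=
  ⟨by decide, by decide, by decide, by decide⟩

lemma case_1000_1001 : goodPair v1000 v1001 v0100 v0110 ∧ goodPair v1000 v1001 v1100 v1111 ∧
    (v0100 ≠ v1100 ∧ v0100 ≠ v1111 ∧ v0110 ≠ v1100 ∧ v0110 ≠ v1111) ∧
    ∀ k l : V4, goodPair v1000 v1001 k l →
      ((k = v0100 ∧ l = v0110) ∨ (k = v0110 ∧ l = v0100) ∨ (k = v1100 ∧ l = v1111) ∨ (k = v1111 ∧ l = v1100)) :=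
  ⟨by decide, by decide, by decide, by decide⟩

lemma case_1000_1100 : goodPair v1000 v1100 v0001 v0011 ∧ goodPair v1000 v1100 v1001 v1111 ∧
    (v0001 ≠ v1001 ∧ v0001 ≠ v1111 ∧ v0011 ≠ v1001 ∧ v0011 ≠ v1111) ∧
    ∀ k l : V4, goodPair v1000 v1100 k l →
      ((k = v0001 ∧ l = v0011) ∨ (k = v0011 ∧ l = v0001) ∨ (k = v1001 ∧ l = v1111) ∨ (k = v1111 ∧ l = v1001)) :=
  ⟨by decide, by decide, by decide, by decide⟩

lemma case_1000_1111 : goodPair v1000 v1111 v0000 v0010 ∧ goodPair v1000 v1111 v1001 v1100 ∧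
    (v0000 ≠ v1001 ∧ v0000 ≠ v1100 ∧ v0010 ≠ v1001 ∧ v0010 ≠ v1100) ∧
    ∀ k l : V4, goodPair v1000 v1111 k l →
      ((k = v0000 ∧ l = v0010) ∨ (k = v0010 ∧ l = v0000) ∨ (k = v1001 ∧ l = v1100) ∨ (k = v1100 ∧ l = v1001)) :=
  ⟨by decide, by decide, by decide, by decide⟩

lemma case_1001_0000 : goodPair v1001 v0000 v0010 v1100 ∧ goodPair v1001 v0000 v0011 v0100 ∧
    (v0010 ≠ v0011 ∧ v0010 ≠ v0100 ∧ v1100 ≠ v0011 ∧ v1100 ≠ v0100) ∧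
    ∀ k l : V4, goodPair v1001 v0000 k l →
      ((k = v0010 ∧ l = v1100) ∨ (k = v1100 ∧ l = v0010) ∨ (k = v0011 ∧ l = v0100) ∨ (k = v0100 ∧ l = v0011)) :=
  ⟨by decide, by decide, by decide, by decide⟩

lemma case_1001_0001 : goodPair v1001 v0001 v0010 v0110 ∧ goodPair v1001 v0001 v0011 v1111 ∧
    (v0010 ≠ v0011 ∧ v0010 ≠ v1111 ∧ v0110 ≠ v0011 ∧ v0110 ≠ v1111) ∧
    ∀ k l : V4, goodPair v1001 v0001 k l →
      ((k = v0010 ∧ l = v0110) ∨ (k = v0110 ∧ l = v0010) ∨ (k = v0011 ∧ l = v1111) ∨ (k = v1111 ∧ l = v0011)) :=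
  ⟨by decide, by decide, by decide, by decide⟩

lemma case_1001_0010 : goodPair v1001 v0010 v0000 v1100 ∧ goodPair v1001 v0010 v0001 v0110 ∧
    (v0000 ≠ v0001 ∧ v0000 ≠ v0110 ∧ v1100 ≠ v0001 ∧ v1100 ≠ v0110) ∧
    ∀ k l : V4, goodPair v1001 v0010 k l →
      ((k = v0000 ∧ l = v1100) ∨ (k = v1100 ∧ l = v0000) ∨ (k = v0001 ∧ l = v0110) ∨ (k = v0110 ∧ l = v0001)) :=
  ⟨by decide, by decide, by decide, by decide⟩

lemma case_1001_0011 : goodPair v1001 v0011 v0000 v0100 ∧ goodPair v1001 v0011 v0001 v1111 ∧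
    (v0000 ≠ v0001 ∧ v0000 ≠ v1111 ∧ v0100 ≠ v0001 ∧ v0100 ≠ v1111) ∧
    ∀ k l : V4, goodPair v1001 v0011 k l →
      ((k = v0000 ∧ l = v0100) ∨ (k = v0100 ∧ l = v0000) ∨ (k = v0001 ∧ l = v1111) ∨ (k = v1111 ∧ l = v0001)) :=
  ⟨by decide, by decide, by decide, by decide⟩

lemma case_1001_0100 : goodPair v1001 v0100 v0000 v0011 ∧ goodPair v1001 v0100 v0110 v1000 ∧
    (v0000 ≠ v0110 ∧ v0000 ≠ v1000 ∧ v0011 ≠ v0110 ∧ v0011 ≠ v1000) ∧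
    ∀ k l : V4, goodPair v1001 v0100 k l →
      ((k = v0000 ∧ l = v0011) ∨ (k = v0011 ∧ l = v0000) ∨ (k = v0110 ∧ l = v1000) ∨ (k = v1000 ∧ l = v0110)) :=
  ⟨by decide, by decide, by decide, by decide⟩

lemma case_1001_0110 : goodPair v1001 v0110 v0001 v0010 ∧ goodPair v1001 v0110 v0100 v1000 ∧
    (v0001 ≠ v0100 ∧ v0001 ≠ v1000 ∧ v0010 ≠ v0100 ∧ v0010 ≠ v1000) ∧
    ∀ k l : V4, goodPair v1001 v0110 k l →
      ((k = v0001 ∧ l = v0010) ∨ (k = v0010 ∧ l = v0001) ∨ (k = v0100 ∧ l = v1000) ∨ (k = v1000 ∧ l = v0100)) :=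
  ⟨by decide, by decide, by decide, by decide⟩

lemma case_1001_1000 : goodPair v1001 v1000 v0100 v0110 ∧ goodPair v1001 v1000 v1100 v1111 ∧
    (v0100 ≠ v1100 ∧ v0100 ≠ v1111 ∧ v0110 ≠ v1100 ∧ v0110 ≠ v1111) ∧
    ∀ k l : V4, goodPair v1001 v1000 k l →
      ((k = v0100 ∧ l = v0110) ∨ (k = v0110 ∧ l = v0100) ∨ (k = v1100 ∧ l = v1111) ∨ (k = v1111 ∧ l = v1100)) :=
  ⟨by decide, by decide, by decide, by decide⟩

lemma case_1001_1100 : goodPair v1001 v1100 v0000 v0010 ∧ goodPair v1001 v1100 v1000 v1111 ∧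
    (v0000 ≠ v1000 ∧ v0000 ≠ v1111 ∧ v0010 ≠ v1000 ∧ v0010 ≠ v1111) ∧
    ∀ k l : V4, goodPair v1001 v1100 k l →
      ((k = v0000 ∧ l = v0010) ∨ (k = v0010 ∧ l = v0000) ∨ (k = v1000 ∧ l = v1111) ∨ (k = v1111 ∧ l = v1000)) :=
  ⟨by decide, by decide, by decide, by decide⟩

lemma case_1001_1111 : goodPair v1001 v1111 v0001 v0011 ∧ goodPair v1001 v1111 v1000 v1100 ∧
    (v0001 ≠ v1000 ∧ v0001 ≠ v1100 ∧ v0011 ≠ v1000 ∧ v0011 ≠ v1100) ∧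
    ∀ k l : V4, goodPair v1001 v1111 k l →
      ((k = v0001 ∧ l = v0011) ∨ (k = v0011 ∧ l = v0001) ∨ (k = v1000 ∧ l = v1100) ∨ (k = v1100 ∧ l = v1000)) :=
  ⟨by decide, by decide, by decide, by decide⟩

lemma case_1100_0000 : goodPair v1100 v0000 v0001 v0110 ∧ goodPair v1100 v0000 v0010 v1001 ∧
    (v0001 ≠ v0010 ∧ v0001 ≠ v1001 ∧ v0110 ≠ v0010 ∧ v0110 ≠ v1001) ∧
    ∀ k l : V4, goodPair v1100 v0000 k l →
      ((k = v0001 ∧ l = v0110) ∨ (k = v0110 ∧ l = v0001) ∨ (k = v0010 ∧ l = v1001) ∨ (k = v1001 ∧ l = v0010)) :=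
  ⟨by decide, by decide, by decide, by decide⟩

lemma case_1100_0001 : goodPair v1100 v0001 v0000 v0110 ∧ goodPair v1100 v0001 v0011 v1000 ∧
    (v0000 ≠ v0011 ∧ v0000 ≠ v1000 ∧ v0110 ≠ v0011 ∧ v0110 ≠ v1000) ∧
    ∀ k l : V4, goodPair v1100 v0001 k l →
      ((k = v0000 ∧ l = v0110) ∨ (k = v0110 ∧ l = v0000) ∨ (k = v0011 ∧ l = v1000) ∨ (k = v1000 ∧ l = v0011)) :=
  ⟨by decide, by decide, by decide, by decide⟩

lemma case_1100_0010 : goodPair v1100 v0010 v0000 v1001 ∧ goodPair v1100 v0010 v0011 v0100 ∧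
    (v0000 ≠ v0011 ∧ v0000 ≠ v0100 ∧ v1001 ≠ v0011 ∧ v1001 ≠ v0100) ∧
    ∀ k l : V4, goodPair v1100 v0010 k l →
      ((k = v0000 ∧ l = v1001) ∨ (k = v1001 ∧ l = v0000) ∨ (k = v0011 ∧ l = v0100) ∨ (k = v0100 ∧ l = v0011)) :=
  ⟨by decide, by decide, by decide, by decide⟩

lemma case_1100_0011 : goodPair v1100 v0011 v0001 v1000 ∧ goodPair v1100 v0011 v0010 v0100 ∧
    (v0001 ≠ v0010 ∧ v0001 ≠ v0100 ∧ v1000 ≠ v0010 ∧ v1000 ≠ v0100) ∧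
    ∀ k l : V4, goodPair v1100 v0011 k l →
      ((k = v0001 ∧ l = v1000) ∨ (k = v1000 ∧ l = v0001) ∨ (k = v0010 ∧ l = v0100) ∨ (k = v0100 ∧ l = v0010)) :=
  ⟨by decide, by decide, by decide, by decide⟩

lemma case_1100_0100 : goodPair v1100 v0100 v0010 v0011 ∧ goodPair v1100 v0100 v0110 v1111 ∧
    (v0010 ≠ v0110 ∧ v0010 ≠ v1111 ∧ v0011 ≠ v0110 ∧ v0011 ≠ v1111) ∧
    ∀ k l : V4, goodPair v1100 v0100 k l →
      ((k = v0010 ∧ l = v0011) ∨ (k = v0011 ∧ l = v0010) ∨ (k = v0110 ∧ l = v1111) ∨ (k = v1111 ∧ l = v0110)) :=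
  ⟨by decide, by decide, by decide, by decide⟩

lemma case_1100_0110 : goodPair v1100 v0110 v0000 v0001 ∧ goodPair v1100 v0110 v0100 v1111 ∧
    (v0000 ≠ v0100 ∧ v0000 ≠ v1111 ∧ v0001 ≠ v0100 ∧ v0001 ≠ v1111) ∧
    ∀ k l : V4, goodPair v1100 v0110 k l →
      ((k = v0000 ∧ l = v0001) ∨ (k = v0001 ∧ l = v0000) ∨ (k = v0100 ∧ l = v1111) ∨ (k = v1111 ∧ l = v0100)) :=
  ⟨by decide, by decide, by decide, by decide⟩

lemma case_1100_1000 : goodPair v1100 v1000 v0001 v0011 ∧ goodPair v1100 v1000 v1001 v1111 ∧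
    (v0001 ≠ v1001 ∧ v0001 ≠ v1111 ∧ v0011 ≠ v1001 ∧ v0011 ≠ v1111) ∧
    ∀ k l : V4, goodPair v1100 v1000 k l →
      ((k = v0001 ∧ l = v0011) ∨ (k = v0011 ∧ l = v0001) ∨ (k = v1001 ∧ l = v1111) ∨ (k = v1111 ∧ l = v1001)) :=
  ⟨by decide, by decide, by decide, by decide⟩

lemma case_1100_1001 : goodPair v1100 v1001 v0000 v0010 ∧ goodPair v1100 v1001 v1000 v1111 ∧
    (v0000 ≠ v1000 ∧ v0000 ≠ v1111 ∧ v0010 ≠ v1000 ∧ v0010 ≠ v1111) ∧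
    ∀ k l : V4, goodPair v1100 v1001 k l →
      ((k = v0000 ∧ l = v0010) ∨ (k = v0010 ∧ l = v0000) ∨ (k = v1000 ∧ l = v1111) ∨ (k = v1111 ∧ l = v1000)) :=
  ⟨by decide, by decide, by decide, by decide⟩

lemma case_1100_1111 : goodPair v1100 v1111 v0100 v0110 ∧ goodPair v1100 v1111 v1000 v1001 ∧
    (v0100 ≠ v1000 ∧ v0100 ≠ v1001 ∧ v0110 ≠ v1000 ∧ v0110 ≠ v1001) ∧
    ∀ k l : V4, goodPair v1100 v1111 k l →
      ((k = v0100 ∧ l = v0110) ∨ (k = v0110 ∧ l = v0100) ∨ (k = v1000 ∧ l = v1001) ∨ (k = v1001 ∧ l = v1000)) :=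
  ⟨by decide, by decide, by decide, by decide⟩

lemma case_1111_0000 : goodPair v1111 v0000 v0001 v0100 ∧ goodPair v1111 v0000 v0010 v1000 ∧
    (v0001 ≠ v0010 ∧ v0001 ≠ v1000 ∧ v0100 ≠ v0010 ∧ v0100 ≠ v1000) ∧
    ∀ k l : V4, goodPair v1111 v0000 k l →
      ((k = v0001 ∧ l = v0100) ∨ (k = v0100 ∧ l = v0001) ∨ (k = v0010 ∧ l = v1000) ∨ (k = v1000 ∧ l = v0010)) :=
  ⟨by decide, by decide, by decide, by decide⟩

lemma case_1111_0001 : goodPair v1111 v0001 v0000 v0100 ∧ goodPair v1111 v0001 v0011 v1001 ∧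
    (v0000 ≠ v0011 ∧ v0000 ≠ v1001 ∧ v0100 ≠ v0011 ∧ v0100 ≠ v1001) ∧
    ∀ k l : V4, goodPair v1111 v0001 k l →
      ((k = v0000 ∧ l = v0100) ∨ (k = v0100 ∧ l = v0000) ∨ (k = v0011 ∧ l = v1001) ∨ (k = v1001 ∧ l = v0011)) :=
  ⟨by decide, by decide, by decide, by decide⟩

lemma case_1111_0010 : goodPair v1111 v0010 v0000 v1000 ∧ goodPair v1111 v0010 v0011 v0110 ∧
    (v0000 ≠ v0011 ∧ v0000 ≠ v0110 ∧ v1000 ≠ v0011 ∧ v1000 ≠ v0110) ∧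
    ∀ k l : V4, goodPair v1111 v0010 k l →
      ((k = v0000 ∧ l = v1000) ∨ (k = v1000 ∧ l = v0000) ∨ (k = v0011 ∧ l = v0110) ∨ (k = v0110 ∧ l = v0011)) :=
  ⟨by decide, by decide, by decide, by decide⟩

lemma case_1111_0011 : goodPair v1111 v0011 v0001 v1001 ∧ goodPair v1111 v0011 v0010 v0110 ∧
    (v0001 ≠ v0010 ∧ v0001 ≠ v0110 ∧ v1001 ≠ v0010 ∧ v1001 ≠ v0110) ∧
    ∀ k l : V4, goodPair v1111 v0011 k l →
      ((k = v0001 ∧ l = v1001) ∨ (k = v1001 ∧ l = v0001) ∨ (k = v0010 ∧ l = v0110) ∨ (k = v0110 ∧ l = v0010)) :=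
  ⟨by decide, by decide, by decide, by decide⟩

lemma case_1111_0100 : goodPair v1111 v0100 v0000 v0001 ∧ goodPair v1111 v0100 v0110 v1100 ∧
    (v0000 ≠ v0110 ∧ v0000 ≠ v1100 ∧ v0001 ≠ v0110 ∧ v0001 ≠ v1100) ∧
    ∀ k l : V4, goodPair v1111 v0100 k l →
      ((k = v0000 ∧ l = v0001) ∨ (k = v0001 ∧ l = v0000) ∨ (k = v0110 ∧ l = v1100) ∨ (k = v1100 ∧ l = v0110)) :=
  ⟨by decide, by decide, by decide, by decide⟩

lemma case_1111_0110 : goodPair v1111 v0110 v0010 v0011 ∧ goodPair v1111 v0110 v0100 v1100 ∧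
    (v0010 ≠ v0100 ∧ v0010 ≠ v1100 ∧ v0011 ≠ v0100 ∧ v0011 ≠ v1100) ∧
    ∀ k l : V4, goodPair v1111 v0110 k l →
      ((k = v0010 ∧ l = v0011) ∨ (k = v0011 ∧ l = v0010) ∨ (k = v0100 ∧ l = v1100) ∨ (k = v1100 ∧ l = v0100)) :=
  ⟨by decide, by decide, by decide, by decide⟩

lemma case_1111_1000 : goodPair v1111 v1000 v0000 v0010 ∧ goodPair v1111 v1000 v1001 v1100 ∧
    (v0000 ≠ v1001 ∧ v0000 ≠ v1100 ∧ v0010 ≠ v1001 ∧ v0010 ≠ v1100) ∧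
    ∀ k l : V4, goodPair v1111 v1000 k l →
      ((k = v0000 ∧ l = v0010) ∨ (k = v0010 ∧ l = v0000) ∨ (k = v1001 ∧ l = v1100) ∨ (k = v1100 ∧ l = v1001)) :=
  ⟨by decide, by decide, by decide, by decide⟩

lemma case_1111_1001 : goodPair v1111 v1001 v0001 v0011 ∧ goodPair v1111 v1001 v1000 v1100 ∧
    (v0001 ≠ v1000 ∧ v0001 ≠ v1100 ∧ v0011 ≠ v1000 ∧ v0011 ≠ v1100) ∧
    ∀ k l : V4, goodPair v1111 v1001 k l →
      ((k = v0001 ∧ l = v0011) ∨ (k = v0011 ∧ l = v0001) ∨ (k = v1000 ∧ l = v1100) ∨ (k = v1100 ∧ l = v1000)) :=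
  ⟨by decide, by decide, by decide, by decide⟩

lemma case_1111_1100 : goodPair v1111 v1100 v0100 v0110 ∧ goodPair v1111 v1100 v1000 v1001 ∧
    (v0100 ≠ v1000 ∧ v0100 ≠ v1001 ∧ v0110 ≠ v1000 ∧ v0110 ≠ v1001) ∧
    ∀ k l : V4, goodPair v1111 v1100 k l →
      ((k = v0100 ∧ l = v0110) ∨ (k = v0110 ∧ l = v0100) ∨ (k = v1000 ∧ l = v1001) ∨ (k = v1001 ∧ l = v1000)) :=
  ⟨by decide, by decide, by decide, by decide⟩

/-- Bridge: `IsAzyQuad ({k,l} ∪ {i,j})` in terms of `q2`. -/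
lemma bridge (i j k l : V4) (hij : i ≠ j) (hkl : k ≠ l) (hki : k ≠ i) (hkj : k ≠ j)
    (hli : l ≠ i) (hlj : l ≠ j) (hqi : q2 i = 0) (hqj : q2 j = 0)
    (hqk : q2 k = 0) (hql : q2 l = 0) :
    IsAzyQuad ({k, l} ∪ {i, j}) ↔
      (q2 (i + j + k) ≠ 0 ∧ q2 (i + j + l) ≠ 0 ∧ q2 (i + k + l) ≠ 0 ∧ q2 (j + k + l) ≠ 0) := by
  have hQ : ({k, l} ∪ {i, j} : Finset V4) = insert k (insert l (insert i {j})) := by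
    ext x
    simp only [Finset.mem_union, Finset.mem_insert, Finset.mem_singleton]
    tauto
  rw [hQ]
  constructor
  · rintro ⟨hsub, hcard, h⟩
    have e1 := h i (by simp) j (by simp) k (by simp) hij (Ne.symm hki) (Ne.symm hkj)
    have e2 := h i (by simp) j (by simp) l (by simp) hij (Ne.symm hli) (Ne.symm hlj)
    have e3 := h i (by simp) k (by simp) l (by simp) (Ne.symm hki) (Ne.symm hli) hkl
    have e4 := h j (by simp) k (by simp) l (by simp) (Ne.symm hkj) (Ne.symm hlj) hkl
    unfold eSyz at e1 e2 e3 e4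
    rw [hqi, hqj, hqk] at e1
    rw [hqi, hqj, hql] at e2
    rw [hqi, hqk, hql] at e3
    rw [hqj, hqk, hql] at e4
    refine ⟨by simpa using e1, by simpa using e2, by simpa using e3, by simpa using e4⟩
  · rintro ⟨e1, e2, e3, e4⟩
    refine ⟨?_, ?_, ?_⟩
    · intro x hx
      simp only [Finset.mem_insert, Finset.mem_singleton] at hx
      rcases hx with rfl | rfl | rfl | rfl <;>
        simp [Echar, Finset.mem_filter, hqi, hqj, hqk, hql]
    · rw [Finset.card_insert_of_notMem (by simp [hkl, hki, hkj]),
        Finset.card_insert_of_notMem (by simp [hli, hlj]), Finset.card_pair hij]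
    · intro x hx y hy z hz hxy hxz hyz
      simp only [Finset.mem_insert, Finset.mem_singleton] at hx hy hz
      rcases hx with rfl | rfl | rfl | rfl <;> rcases hy with rfl | rfl | rfl | rfl <;>
        rcases hz with rfl | rfl | rfl | rfl <;>
        simp_all [eSyz, add_comm, add_left_comm, add_assoc]

lemma main_aux (i j k₁ l₁ k₂ l₂ : V4) (hi : i ∈ Echar) (hj : j ∈ Echar) (hij : i ≠ j)
    (g1 : goodPair i j k₁ l₁) (g2 : goodPair i j k₂ l₂)
    (hd : k₁ ≠ k₂ ∧ k₁ ≠ l₂ ∧ l₁ ≠ k₂ ∧ l₁ ≠ l₂)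
    (huniq : ∀ k l : V4, goodPair i j k l →
      ((k = k₁ ∧ l = l₁) ∨ (k = l₁ ∧ l = k₁) ∨ (k = k₂ ∧ l = l₂) ∨ (k = l₂ ∧ l = k₂))) :
    ∃ P₁ P₂ : Finset V4, P₁ ≠ P₂ ∧ Disjoint P₁ P₂ ∧
      ∀ P : Finset V4,
        (P.card = 2 ∧ P ⊆ Echar \ {i, j} ∧ IsAzyQuad (P ∪ {i, j})) ↔
          (P = P₁ ∨ P = P₂) := by
  have hqi : q2 i = 0 := (Finset.mem_filter.mp hi).2
  have hqj : q2 j = 0 := (Finset.mem_filter.mp hj).2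
  obtain ⟨hq1, hq2, h12, h1i, h1j, h2i, h2j, f1, f2, f3, f4⟩ := g1
  obtain ⟨hq1', hq2', h12', h1i', h1j', h2i', h2j', f1', f2', f3', f4'⟩ := g2
  obtain ⟨d1, d2, d3, d4⟩ := hd
  refine ⟨{k₁, l₁}, {k₂, l₂}, ?_, ?_, ?_⟩
  · intro h
    have : k₁ ∈ ({k₂, l₂} : Finset V4) := h ▸ (by simp)
    simp only [Finset.mem_insert, Finset.mem_singleton] at this
    rcases this with h' | h' <;> [exact d1 h'; exact d2 h']
  · rw [Finset.disjoint_left]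
    intro a ha hb
    simp only [Finset.mem_insert, Finset.mem_singleton] at ha hb
    rcases ha with rfl | rfl <;> rcases hb with h' | h' <;>
      [exact d1 h'; exact d2 h'; exact d3 h'; exact d4 h']
  · intro P
    constructor
    · rintro ⟨hcard, hsub, hazy⟩
      obtain ⟨k, l, hkl, rfl⟩ := Finset.card_eq_two.mp hcard
      have hk := hsub (by simp : k ∈ ({k, l} : Finset V4))
      have hl := hsub (by simp : l ∈ ({k, l} : Finset V4))
      rw [Finset.mem_sdiff] at hk hl
      have hqk : q2 k = 0 := (Finset.mem_filter.mp hk.1).2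
      have hql : q2 l = 0 := (Finset.mem_filter.mp hl.1).2
      have hki : k ≠ i := fun h => hk.2 (by simp [h])
      have hkj : k ≠ j := fun h => hk.2 (by simp [h])
      have hli : l ≠ i := fun h => hl.2 (by simp [h])
      have hlj : l ≠ j := fun h => hl.2 (by simp [h])
      obtain ⟨e1, e2, e3, e4⟩ :=
        (bridge i j k l hij hkl hki hkj hli hlj hqi hqj hqk hql).mp hazy
      have hg : goodPair i j k l :=
        ⟨hqk, hql, hkl, hki, hkj, hli, hlj, e1, e2, e3, e4⟩
      rcases huniq k l hg with ⟨rfl, rfl⟩ | ⟨rfl, rfl⟩ | ⟨rfl, rfl⟩ | ⟨rfl, rfl⟩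
      · exact Or.inl rfl
      · exact Or.inl (Finset.pair_comm _ _)
      · exact Or.inr rfl
      · exact Or.inr (Finset.pair_comm _ _)
    · rintro (rfl | rfl)
      · refine ⟨Finset.card_pair h12, ?_, ?_⟩
        · intro x hx
          simp only [Finset.mem_insert, Finset.mem_singleton] at hx
          rw [Finset.mem_sdiff]
          rcases hx with rfl | rfl <;>
            refine ⟨Finset.mem_filter.mpr ⟨Finset.mem_univ _, by assumption⟩, ?_⟩ <;>
            simp_all
        · exact (bridge i j k₁ l₁ hij h12 h1i h1j h2i h2j hqi hqj hq1 hq2).mpr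
            ⟨f1, f2, f3, f4⟩
      · refine ⟨Finset.card_pair h12', ?_, ?_⟩
        · intro x hx
          simp only [Finset.mem_insert, Finset.mem_singleton] at hx
          rw [Finset.mem_sdiff]
          rcases hx with rfl | rfl <;>
            refine ⟨Finset.mem_filter.mpr ⟨Finset.mem_univ _, by assumption⟩, ?_⟩ <;>
            simp_all
        · exact (bridge i j k₂ l₂ hij h12' h1i' h1j' h2i' h2j' hqi hqj hq1' hq2').mpr
            ⟨f1', f2', f3', f4'⟩

/-- any pair of distinct elements of `E` is completed into an azygous
quadruple by exactly two 2-element subsets of `E \ {i,j}`, which are disjoint. -/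
theorem two_disjoint_completing_pairs (i j : V4)
    (hi : i ∈ Echar) (hj : j ∈ Echar) (hij : i ≠ j) :
    ∃ P₁ P₂ : Finset V4, P₁ ≠ P₂ ∧ Disjoint P₁ P₂ ∧
      ∀ P : Finset V4,
        (P.card = 2 ∧ P ⊆ Echar \ {i, j} ∧ IsAzyQuad (P ∪ {i, j})) ↔
          (P = P₁ ∨ P = P₂) := by
  rcases echar_cases i hi with rfl|rfl|rfl|rfl|rfl|rfl|rfl|rfl|rfl|rfl
  · rcases echar_cases j hj with rfl|rfl|rfl|rfl|rfl|rfl|rfl|rfl|rfl|rfl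
    · exact absurd rfl hij
    · exact main_aux _ _ _ _ _ _ hi hj hij case_0000_0001.1 case_0000_0001.2.1 case_0000_0001.2.2.1 case_0000_0001.2.2.2
    · exact main_aux _ _ _ _ _ _ hi hj hij case_0000_0010.1 case_0000_0010.2.1 case_0000_0010.2.2.1 case_0000_0010.2.2.2
    · exact main_aux _ _ _ _ _ _ hi hj hij case_0000_0011.1 case_0000_0011.2.1 case_0000_0011.2.2.1 case_0000_0011.2.2.2
    · exact main_aux _ _ _ _ _ _ hi hj hij case_0000_0100.1 case_0000_0100.2.1 case_0000_0100.2.2.1 case_0000_0100.2.2.2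
    · exact main_aux _ _ _ _ _ _ hi hj hij case_0000_0110.1 case_0000_0110.2.1 case_0000_0110.2.2.1 case_0000_0110.2.2.2
    · exact main_aux _ _ _ _ _ _ hi hj hij case_0000_1000.1 case_0000_1000.2.1 case_0000_1000.2.2.1 case_0000_1000.2.2.2
    · exact main_aux _ _ _ _ _ _ hi hj hij case_0000_1001.1 case_0000_1001.2.1 case_0000_1001.2.2.1 case_0000_1001.2.2.2
    · exact main_aux _ _ _ _ _ _ hi hj hij case_0000_1100.1 case_0000_1100.2.1 case_0000_1100.2.2.1 case_0000_1100.2.2.2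
    · exact main_aux _ _ _ _ _ _ hi hj hij case_0000_1111.1 case_0000_1111.2.1 case_0000_1111.2.2.1 case_0000_1111.2.2.2
  · rcases echar_cases j hj with rfl|rfl|rfl|rfl|rfl|rfl|rfl|rfl|rfl|rfl
    · exact main_aux _ _ _ _ _ _ hi hj hij case_0001_0000.1 case_0001_0000.2.1 case_0001_0000.2.2.1 case_0001_0000.2.2.2
    · exact absurd rfl hij
    · exact main_aux _ _ _ _ _ _ hi hj hij case_0001_0010.1 case_0001_0010.2.1 case_0001_0010.2.2.1 case_0001_0010.2.2.2
    · exact main_aux _ _ _ _ _ _ hi hj hij case_0001_0011.1 case_0001_0011.2.1 case_0001_0011.2.2.1 case_0001_0011.2.2.2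
    · exact main_aux _ _ _ _ _ _ hi hj hij case_0001_0100.1 case_0001_0100.2.1 case_0001_0100.2.2.1 case_0001_0100.2.2.2
    · exact main_aux _ _ _ _ _ _ hi hj hij case_0001_0110.1 case_0001_0110.2.1 case_0001_0110.2.2.1 case_0001_0110.2.2.2
    · exact main_aux _ _ _ _ _ _ hi hj hij case_0001_1000.1 case_0001_1000.2.1 case_0001_1000.2.2.1 case_0001_1000.2.2.2
    · exact main_aux _ _ _ _ _ _ hi hj hij case_0001_1001.1 case_0001_1001.2.1 case_0001_1001.2.2.1 case_0001_1001.2.2.2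
    · exact main_aux _ _ _ _ _ _ hi hj hij case_0001_1100.1 case_0001_1100.2.1 case_0001_1100.2.2.1 case_0001_1100.2.2.2
    · exact main_aux _ _ _ _ _ _ hi hj hij case_0001_1111.1 case_0001_1111.2.1 case_0001_1111.2.2.1 case_0001_1111.2.2.2
  · rcases echar_cases j hj with rfl|rfl|rfl|rfl|rfl|rfl|rfl|rfl|rfl|rfl
    · exact main_aux _ _ _ _ _ _ hi hj hij case_0010_0000.1 case_0010_0000.2.1 case_0010_0000.2.2.1 case_0010_0000.2.2.2
    · exact main_aux _ _ _ _ _ _ hi hj hij case_0010_0001.1 case_0010_0001.2.1 case_0010_0001.2.2.1 case_0010_0001.2.2.2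
    · exact absurd rfl hij
    · exact main_aux _ _ _ _ _ _ hi hj hij case_0010_0011.1 case_0010_0011.2.1 case_0010_0011.2.2.1 case_0010_0011.2.2.2
    · exact main_aux _ _ _ _ _ _ hi hj hij case_0010_0100.1 case_0010_0100.2.1 case_0010_0100.2.2.1 case_0010_0100.2.2.2
    · exact main_aux _ _ _ _ _ _ hi hj hij case_0010_0110.1 case_0010_0110.2.1 case_0010_0110.2.2.1 case_0010_0110.2.2.2
    · exact main_aux _ _ _ _ _ _ hi hj hij case_0010_1000.1 case_0010_1000.2.1 case_0010_1000.2.2.1 case_0010_1000.2.2.2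
    · exact main_aux _ _ _ _ _ _ hi hj hij case_0010_1001.1 case_0010_1001.2.1 case_0010_1001.2.2.1 case_0010_1001.2.2.2
    · exact main_aux _ _ _ _ _ _ hi hj hij case_0010_1100.1 case_0010_1100.2.1 case_0010_1100.2.2.1 case_0010_1100.2.2.2
    · exact main_aux _ _ _ _ _ _ hi hj hij case_0010_1111.1 case_0010_1111.2.1 case_0010_1111.2.2.1 case_0010_1111.2.2.2
  · rcases echar_cases j hj with rfl|rfl|rfl|rfl|rfl|rfl|rfl|rfl|rfl|rfl
    · exact main_aux _ _ _ _ _ _ hi hj hij case_0011_0000.1 case_0011_0000.2.1 case_0011_0000.2.2.1 case_0011_0000.2.2.2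
    · exact main_aux _ _ _ _ _ _ hi hj hij case_0011_0001.1 case_0011_0001.2.1 case_0011_0001.2.2.1 case_0011_0001.2.2.2
    · exact main_aux _ _ _ _ _ _ hi hj hij case_0011_0010.1 case_0011_0010.2.1 case_0011_0010.2.2.1 case_0011_0010.2.2.2
    · exact absurd rfl hij
    · exact main_aux _ _ _ _ _ _ hi hj hij case_0011_0100.1 case_0011_0100.2.1 case_0011_0100.2.2.1 case_0011_0100.2.2.2
    · exact main_aux _ _ _ _ _ _ hi hj hij case_0011_0110.1 case_0011_0110.2.1 case_0011_0110.2.2.1 case_0011_0110.2.2.2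
    · exact main_aux _ _ _ _ _ _ hi hj hij case_0011_1000.1 case_0011_1000.2.1 case_0011_1000.2.2.1 case_0011_1000.2.2.2
    · exact main_aux _ _ _ _ _ _ hi hj hij case_0011_1001.1 case_0011_1001.2.1 case_0011_1001.2.2.1 case_0011_1001.2.2.2
    · exact main_aux _ _ _ _ _ _ hi hj hij case_0011_1100.1 case_0011_1100.2.1 case_0011_1100.2.2.1 case_0011_1100.2.2.2
    · exact main_aux _ _ _ _ _ _ hi hj hij case_0011_1111.1 case_0011_1111.2.1 case_0011_1111.2.2.1 case_0011_1111.2.2.2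
  · rcases echar_cases j hj with rfl|rfl|rfl|rfl|rfl|rfl|rfl|rfl|rfl|rfl
    · exact main_aux _ _ _ _ _ _ hi hj hij case_0100_0000.1 case_0100_0000.2.1 case_0100_0000.2.2.1 case_0100_0000.2.2.2
    · exact main_aux _ _ _ _ _ _ hi hj hij case_0100_0001.1 case_0100_0001.2.1 case_0100_0001.2.2.1 case_0100_0001.2.2.2
    · exact main_aux _ _ _ _ _ _ hi hj hij case_0100_0010.1 case_0100_0010.2.1 case_0100_0010.2.2.1 case_0100_0010.2.2.2
    · exact main_aux _ _ _ _ _ _ hi hj hij case_0100_0011.1 case_0100_0011.2.1 case_0100_0011.2.2.1 case_0100_0011.2.2.2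
    · exact absurd rfl hij
    · exact main_aux _ _ _ _ _ _ hi hj hij case_0100_0110.1 case_0100_0110.2.1 case_0100_0110.2.2.1 case_0100_0110.2.2.2
    · exact main_aux _ _ _ _ _ _ hi hj hij case_0100_1000.1 case_0100_1000.2.1 case_0100_1000.2.2.1 case_0100_1000.2.2.2
    · exact main_aux _ _ _ _ _ _ hi hj hij case_0100_1001.1 case_0100_1001.2.1 case_0100_1001.2.2.1 case_0100_1001.2.2.2
    · exact main_aux _ _ _ _ _ _ hi hj hij case_0100_1100.1 case_0100_1100.2.1 case_0100_1100.2.2.1 case_0100_1100.2.2.2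
    · exact main_aux _ _ _ _ _ _ hi hj hij case_0100_1111.1 case_0100_1111.2.1 case_0100_1111.2.2.1 case_0100_1111.2.2.2
  · rcases echar_cases j hj with rfl|rfl|rfl|rfl|rfl|rfl|rfl|rfl|rfl|rfl
    · exact main_aux _ _ _ _ _ _ hi hj hij case_0110_0000.1 case_0110_0000.2.1 case_0110_0000.2.2.1 case_0110_0000.2.2.2
    · exact main_aux _ _ _ _ _ _ hi hj hij case_0110_0001.1 case_0110_0001.2.1 case_0110_0001.2.2.1 case_0110_0001.2.2.2
    · exact main_aux _ _ _ _ _ _ hi hj hij case_0110_0010.1 case_0110_0010.2.1 case_0110_0010.2.2.1 case_0110_0010.2.2.2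
    · exact main_aux _ _ _ _ _ _ hi hj hij case_0110_0011.1 case_0110_0011.2.1 case_0110_0011.2.2.1 case_0110_0011.2.2.2
    · exact main_aux _ _ _ _ _ _ hi hj hij case_0110_0100.1 case_0110_0100.2.1 case_0110_0100.2.2.1 case_0110_0100.2.2.2
    · exact absurd rfl hij
    · exact main_aux _ _ _ _ _ _ hi hj hij case_0110_1000.1 case_0110_1000.2.1 case_0110_1000.2.2.1 case_0110_1000.2.2.2
    · exact main_aux _ _ _ _ _ _ hi hj hij case_0110_1001.1 case_0110_1001.2.1 case_0110_1001.2.2.1 case_0110_1001.2.2.2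
    · exact main_aux _ _ _ _ _ _ hi hj hij case_0110_1100.1 case_0110_1100.2.1 case_0110_1100.2.2.1 case_0110_1100.2.2.2
    · exact main_aux _ _ _ _ _ _ hi hj hij case_0110_1111.1 case_0110_1111.2.1 case_0110_1111.2.2.1 case_0110_1111.2.2.2
  · rcases echar_cases j hj with rfl|rfl|rfl|rfl|rfl|rfl|rfl|rfl|rfl|rfl
    · exact main_aux _ _ _ _ _ _ hi hj hij case_1000_0000.1 case_1000_0000.2.1 case_1000_0000.2.2.1 case_1000_0000.2.2.2
    · exact main_aux _ _ _ _ _ _ hi hj hij case_1000_0001.1 case_1000_0001.2.1 case_1000_0001.2.2.1 case_1000_0001.2.2.2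
    · exact main_aux _ _ _ _ _ _ hi hj hij case_1000_0010.1 case_1000_0010.2.1 case_1000_0010.2.2.1 case_1000_0010.2.2.2
    · exact main_aux _ _ _ _ _ _ hi hj hij case_1000_0011.1 case_1000_0011.2.1 case_1000_0011.2.2.1 case_1000_0011.2.2.2
    · exact main_aux _ _ _ _ _ _ hi hj hij case_1000_0100.1 case_1000_0100.2.1 case_1000_0100.2.2.1 case_1000_0100.2.2.2
    · exact main_aux _ _ _ _ _ _ hi hj hij case_1000_0110.1 case_1000_0110.2.1 case_1000_0110.2.2.1 case_1000_0110.2.2.2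
    · exact absurd rfl hij
    · exact main_aux _ _ _ _ _ _ hi hj hij case_1000_1001.1 case_1000_1001.2.1 case_1000_1001.2.2.1 case_1000_1001.2.2.2
    · exact main_aux _ _ _ _ _ _ hi hj hij case_1000_1100.1 case_1000_1100.2.1 case_1000_1100.2.2.1 case_1000_1100.2.2.2
    · exact main_aux _ _ _ _ _ _ hi hj hij case_1000_1111.1 case_1000_1111.2.1 case_1000_1111.2.2.1 case_1000_1111.2.2.2
  · rcases echar_cases j hj with rfl|rfl|rfl|rfl|rfl|rfl|rfl|rfl|rfl|rfl
    · exact main_aux _ _ _ _ _ _ hi hj hij case_1001_0000.1 case_1001_0000.2.1 case_1001_0000.2.2.1 case_1001_0000.2.2.2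
    · exact main_aux _ _ _ _ _ _ hi hj hij case_1001_0001.1 case_1001_0001.2.1 case_1001_0001.2.2.1 case_1001_0001.2.2.2
    · exact main_aux _ _ _ _ _ _ hi hj hij case_1001_0010.1 case_1001_0010.2.1 case_1001_0010.2.2.1 case_1001_0010.2.2.2
    · exact main_aux _ _ _ _ _ _ hi hj hij case_1001_0011.1 case_1001_0011.2.1 case_1001_0011.2.2.1 case_1001_0011.2.2.2
    · exact main_aux _ _ _ _ _ _ hi hj hij case_1001_0100.1 case_1001_0100.2.1 case_1001_0100.2.2.1 case_1001_0100.2.2.2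
    · exact main_aux _ _ _ _ _ _ hi hj hij case_1001_0110.1 case_1001_0110.2.1 case_1001_0110.2.2.1 case_1001_0110.2.2.2
    · exact main_aux _ _ _ _ _ _ hi hj hij case_1001_1000.1 case_1001_1000.2.1 case_1001_1000.2.2.1 case_1001_1000.2.2.2
    · exact absurd rfl hij
    · exact main_aux _ _ _ _ _ _ hi hj hij case_1001_1100.1 case_1001_1100.2.1 case_1001_1100.2.2.1 case_1001_1100.2.2.2
    · exact main_aux _ _ _ _ _ _ hi hj hij case_1001_1111.1 case_1001_1111.2.1 case_1001_1111.2.2.1 case_1001_1111.2.2.2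
  · rcases echar_cases j hj with rfl|rfl|rfl|rfl|rfl|rfl|rfl|rfl|rfl|rfl
    · exact main_aux _ _ _ _ _ _ hi hj hij case_1100_0000.1 case_1100_0000.2.1 case_1100_0000.2.2.1 case_1100_0000.2.2.2
    · exact main_aux _ _ _ _ _ _ hi hj hij case_1100_0001.1 case_1100_0001.2.1 case_1100_0001.2.2.1 case_1100_0001.2.2.2
    · exact main_aux _ _ _ _ _ _ hi hj hij case_1100_0010.1 case_1100_0010.2.1 case_1100_0010.2.2.1 case_1100_0010.2.2.2
    · exact main_aux _ _ _ _ _ _ hi hj hij case_1100_0011.1 case_1100_0011.2.1 case_1100_0011.2.2.1 case_1100_0011.2.2.2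
    · exact main_aux _ _ _ _ _ _ hi hj hij case_1100_0100.1 case_1100_0100.2.1 case_1100_0100.2.2.1 case_1100_0100.2.2.2
    · exact main_aux _ _ _ _ _ _ hi hj hij case_1100_0110.1 case_1100_0110.2.1 case_1100_0110.2.2.1 case_1100_0110.2.2.2
    · exact main_aux _ _ _ _ _ _ hi hj hij case_1100_1000.1 case_1100_1000.2.1 case_1100_1000.2.2.1 case_1100_1000.2.2.2
    · exact main_aux _ _ _ _ _ _ hi hj hij case_1100_1001.1 case_1100_1001.2.1 case_1100_1001.2.2.1 case_1100_1001.2.2.2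
    · exact absurd rfl hij
    · exact main_aux _ _ _ _ _ _ hi hj hij case_1100_1111.1 case_1100_1111.2.1 case_1100_1111.2.2.1 case_1100_1111.2.2.2
  · rcases echar_cases j hj with rfl|rfl|rfl|rfl|rfl|rfl|rfl|rfl|rfl|rfl
    · exact main_aux _ _ _ _ _ _ hi hj hij case_1111_0000.1 case_1111_0000.2.1 case_1111_0000.2.2.1 case_1111_0000.2.2.2
    · exact main_aux _ _ _ _ _ _ hi hj hij case_1111_0001.1 case_1111_0001.2.1 case_1111_0001.2.2.1 case_1111_0001.2.2.2
    · exact main_aux _ _ _ _ _ _ hi hj hij case_1111_0010.1 case_1111_0010.2.1 case_1111_0010.2.2.1 case_1111_0010.2.2.2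
    · exact main_aux _ _ _ _ _ _ hi hj hij case_1111_0011.1 case_1111_0011.2.1 case_1111_0011.2.2.1 case_1111_0011.2.2.2
    · exact main_aux _ _ _ _ _ _ hi hj hij case_1111_0100.1 case_1111_0100.2.1 case_1111_0100.2.2.1 case_1111_0100.2.2.2
    · exact main_aux _ _ _ _ _ _ hi hj hij case_1111_0110.1 case_1111_0110.2.1 case_1111_0110.2.2.1 case_1111_0110.2.2.2
    · exact main_aux _ _ _ _ _ _ hi hj hij case_1111_1000.1 case_1111_1000.2.1 case_1111_1000.2.2.1 case_1111_1000.2.2.2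
    · exact main_aux _ _ _ _ _ _ hi hj hij case_1111_1001.1 case_1111_1001.2.1 case_1111_1001.2.2.1 case_1111_1001.2.2.2
    · exact main_aux _ _ _ _ _ _ hi hj hij case_1111_1100.1 case_1111_1100.2.1 case_1111_1100.2.2.1 case_1111_1100.2.2.2
    · exact absurd rfl hij
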